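/- Let all parameters b_H, b_M, d_M, β_MH, β_HM, γ_H, γ_M, σ_H, K, H be positive with b_M > d_M, and set K* = K(1 − d_M/b_M), a_H = (γ_H+b_H)(σ_H+b_H)/(b_H γ_H), a_M = (γ_M+d_M)/γ_M, R₀^M = √(β_HM β_MH K* γ_M γ_H / (H d_M (b_H+σ_H)(γ_M+d_M)(γ_H+b_H))), I_H* = (K* β_MH/(H b_H a_M + K* β_MH))·(1 − 1/(R₀^M)²)·(H/a_H), and I_M* = (β_HM/(a_H d_M + β_HM))·(1 − 1/(R₀^M)²)·(K*/a_M). If R₀^M > 1, then the tuple (S_H*, E_H*, I_H*, S_M*, E_M*, I_M*) = (H − a_H I_H*, ((σ_H+b_H)/γ_H) I_H*, I_H*, K* − a_M I_M*, (d_M/γ_M) I_M*, I_M*) satisfies all six stationarity equations: 0 = b_H H − (β_MH/H) I_M* S_H* − b_H S_H*; 0 = (β_MH/H) I_M* S_H* − (γ_H+b_H) E_H*; 0 = γ_H E_H* − (σ_H+b_H) I_H*; 0 = d_M M* − (β_HM/H) S_M* I_H* − d_M S_M* with M* = S_M*+E_M*+I_M* = K*; 0 = (β_HM/H) S_M* I_H*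 − (γ_M+d_M) E_M*; 0 = γ_M E_M* − d_M I_M*. Moreover I_H* > 0 and I_M* > 0 if and only if R₀^M > 1. -/

import Mathlib

set_option maxHeartbeats 1000000 in
private lemma keyA_gen (Kstar aH aM r βMH βHM bH dM H : ℝ)
    (hKs : 0 < Kstar) (haH : 0 < aH) (haM : 0 < aM) (hr : 0 < r)
    (hβMH : 0 < βMH) (hβHM : 0 < βHM) (hbH : 0 < bH) (hdM : 0 < dM) (hH : 0 < H)
    (hkey : βHM * βMH * Kstar = r * (bH * H * dM * aH * aM)) :
    (βMH / H) * ((βHM / (aH * dM + βHM)) * (1 - 1 / r) * (Kstar / aM)) *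
      (H - aH * ((Kstar * βMH / (H * bH * aM + Kstar * βMH)) * (1 - 1 / r) * (H / aH)))
    = bH * aH * ((Kstar * βMH / (H * bH * aM + Kstar * βMH)) * (1 - 1 / r) * (H / aH)) := by
  have hD1 : (H * bH * aM + Kstar * βMH) ≠ 0 := by positivity
  have hD2 : (aH * dM + βHM) ≠ 0 := by positivity
  have hrne : r ≠ 0 := hr.ne'
  field_simp
  linear_combination (r - 1) * hkey

set_option maxHeartbeats 1000000 in
private lemma keyB_gen (Kstar aH aM r βMH βHM bH dM H : ℝ)
    (hKs : 0 < Kstar) (haH : 0 < aH) (haM : 0 < aM) (hr : 0 < r)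
    (hβMH : 0 < βMH) (hβHM : 0 < βHM) (hbH : 0 < bH) (hdM : 0 < dM) (hH : 0 < H)
    (hkey : βHM * βMH * Kstar = r * (bH * H * dM * aH * aM)) :
    (βHM / H) * (Kstar - aM * ((βHM / (aH * dM + βHM)) * (1 - 1 / r) * (Kstar / aM))) *
      ((Kstar * βMH / (H * bH * aM + Kstar * βMH)) * (1 - 1 / r) * (H / aH))
    = dM * aM * ((βHM / (aH * dM + βHM)) * (1 - 1 / r) * (Kstar / aM)) := by
  have hD1 : (H * bH * aM + Kstar * βMH) ≠ 0 := by positivity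
  have hD2 : (aH * dM + βHM) ≠ 0 := by positivity
  have hrne : r ≠ 0 := hr.ne'
  field_simp
  linear_combination (r - 1) * hkey

set_option maxHeartbeats 1000000 in
/-- endemic equilibrium of the uncontrolled SEIR–SEI system.
If `R₀^M > 1` then the explicit tuple satisfies the six stationarity equations
(with `M* = S_M* + E_M* + I_M* = K*`), and moreover `I_H* > 0 ∧ I_M* > 0 ↔ R₀^M > 1`. -/
theorem endemic_equilibrium_SEIR
    (bH bM dM βMH βHM γH γM σH K H : ℝ)
    (hbH : 0 < bH) (hbM : 0 < bM) (hdM : 0 < dM) (hβMH : 0 < βMH) (hβHM : 0 < βHM)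
    (hγH : 0 < γH) (hγM : 0 < γM) (hσH : 0 < σH) (hK : 0 < K) (hH : 0 < H)
    (hbMdM : dM < bM) :
    let Kstar : ℝ := K * (1 - dM / bM)
    let aH : ℝ := (γH + bH) * (σH + bH) / (bH * γH)
    let aM : ℝ := (γM + dM) / γM
    let R0M : ℝ := Real.sqrt (βHM * βMH * Kstar * γM * γH /
      (H * dM * (bH + σH) * (γM + dM) * (γH + bH)))
    let IHs : ℝ := (Kstar * βMH / (H * bH * aM + Kstar * βMH)) * (1 - 1 / R0M ^ 2) * (H / aH)
    let IMs : ℝ := (βHM / (aH * dM + βHM)) * (1 - 1 / R0M ^ 2) * (Kstar / aM)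
    let SHs : ℝ := H - aH * IHs
    let EHs : ℝ := ((σH + bH) / γH) * IHs
    let SMs : ℝ := Kstar - aM * IMs
    let EMs : ℝ := (dM / γM) * IMs
    (1 < R0M →
      ((0 : ℝ) = bH * H - (βMH / H) * IMs * SHs - bH * SHs ∧
       (0 : ℝ) = (βMH / H) * IMs * SHs - (γH + bH) * EHs ∧
       (0 : ℝ) = γH * EHs - (σH + bH) * IHs ∧
       SMs + EMs + IMs = Kstar ∧
       (0 : ℝ) = dM * (SMs + EMs + IMs) - (βHM / H) * SMs * IHs - dM * SMs ∧
       (0 : ℝ) = (βHM / H) * SMs * IHs - (γM + dM) * EMs ∧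
       (0 : ℝ) = γM * EMs - dM * IMs)) ∧
    ((0 < IHs ∧ 0 < IMs) ↔ 1 < R0M) := by
  intro Kstar aH aM R0M IHs IMs SHs EHs SMs EMs
  have hc : 0 < 1 - dM / bM := by
    have h1 : dM / bM < 1 := (div_lt_one hbM).2 hbMdM
    linarith
  have hKs : 0 < Kstar := by simp only [Kstar]; positivity
  have haH : 0 < aH := by simp only [aH]; positivity
  have haM : 0 < aM := by simp only [aM]; positivity
  have hrpos : 0 < βHM * βMH * Kstar * γM * γH /
      (H * dM * (bH + σH) * (γM + dM) * (γH + bH)) := by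
    apply div_pos <;> positivity
  have hR2 : R0M ^ 2 = βHM * βMH * Kstar * γM * γH /
      (H * dM * (bH + σH) * (γM + dM) * (γH + bH)) := Real.sq_sqrt hrpos.le
  have hiff : (1 : ℝ) < R0M ↔ 1 < βHM * βMH * Kstar * γM * γH /
      (H * dM * (bH + σH) * (γM + dM) * (γH + bH)) := by
    simp only [R0M]
    rw [Real.lt_sqrt zero_le_one, one_pow]
  set r : ℝ := βHM * βMH * Kstar * γM * γH /
      (H * dM * (bH + σH) * (γM + dM) * (γH + bH)) with hrdef
  have hkey : βHM * βMH * Kstar = r * (bH * H * dM * aH * aM) := by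
    rw [hrdef]; simp only [aH, aM]
    field_simp
    ring
  have hIHs : IHs = (Kstar * βMH / (H * bH * aM + Kstar * βMH)) * (1 - 1 / r) * (H / aH) := by
    simp only [IHs, hR2]
  have hIMs : IMs = (βHM / (aH * dM + βHM)) * (1 - 1 / r) * (Kstar / aM) := by
    simp only [IMs, hR2]
  have hA : 0 < Kstar * βMH / (H * bH * aM + Kstar * βMH) := by
    apply div_pos (by positivity) (by positivity)
  have hB : 0 < H / aH := div_pos hH haH
  have hC : 0 < βHM / (aH * dM + βHM) := by
    apply div_pos (by positivity) (by positivity)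
  have hD : 0 < Kstar / aM := div_pos hKs haM
  constructor
  · intro hR
    have hr1 : 1 < r := hiff.mp hR
    have keyA : (βMH / H) * IMs * SHs = bH * aH * IHs := by
      simp only [SHs]; rw [hIHs, hIMs]
      exact keyA_gen Kstar aH aM r βMH βHM bH dM H hKs haH haM (by linarith)
        hβMH hβHM hbH hdM hH hkey
    have keyB : (βHM / H) * SMs * IHs = dM * aM * IMs := by
      simp only [SMs]; rw [hIHs, hIMs]
      exact keyB_gen Kstar aH aM r βMH βHM bH dM H hKs haH haM (by linarith)
        hβMH hβHM hbH hdM hH hkey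
    have eq4 : SMs + EMs + IMs = Kstar := by
      simp only [SMs, EMs, aM]
      field_simp
      ring
    refine ⟨?_, ?_, ?_, eq4, ?_, ?_, ?_⟩
    · rw [keyA]; simp only [SHs]; ring
    · rw [keyA]; simp only [EHs, aH]; field_simp; ring
    · simp only [EHs]; field_simp; ring
    · rw [eq4, keyB]; simp only [SMs]; ring
    · rw [keyB]; simp only [EMs, aM]; field_simp; ring
    · simp only [EMs]; field_simp; ring
  · constructor
    · rintro ⟨h1, _⟩
      rw [hIHs] at h1
      have hu : 0 < 1 - 1 / r := by
        by_contra hcon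
        push_neg at hcon
        nlinarith [mul_pos hA hB, mul_nonneg hA.le hB.le]
      rw [hiff]
      have : 1 / r < 1 := by linarith
      exact (div_lt_one hrpos).mp this
    · intro hR
      have hr1 : 1 < r := hiff.mp hR
      have hrp : 0 < r := by linarith
      have hu : 0 < 1 - 1 / r := by
        have : 1 / r < 1 := (div_lt_one hrp).mpr hr1
        linarith
      rw [hIHs, hIMs]
      exact ⟨mul_pos (mul_pos hA hu) hB, mul_pos (mul_pos hC hu) hD⟩
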